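/- Let 0 < p ≤ 1, let 𝒥 be a finite or countable family of cubes in ℝⁿ, and for each Q ∈ 𝒥 let f_Q be a nonnegative integrable function on ℝⁿ with support contained in Q. Then there exists a constant C depending only on n and p such that ‖ Σ_{Q∈𝒥} f_Q ‖_{L^p(ℝⁿ)} ≤ C ‖ Σ_{Q∈𝒥} ( |Q|^{−1} ∫_Q f_Q(x) dx ) χ_{Q*} ‖_{L^p(ℝⁿ)}. -/

import Mathlib

open MeasureTheory Real Complex Set Filter Function
open scoped FourierTransform ENNReal NNReal Topology SchwartzMap Classical

noncomputable section

/-- Euclidean space `ℝⁿ`. -/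
abbrev En (n : ℕ) : Type := EuclideanSpace ℝ (Fin n)

/-- Euclidean space `ℝ^{mn} = (ℝⁿ)^m`. -/
abbrev Emn (m n : ℕ) : Type := EuclideanSpace ℝ (Fin m × Fin n)

/-- The `i`-th `ℝⁿ`-component of a point of `ℝ^{mn}`. -/
def comp {m n : ℕ} (y : Emn m n) (i : Fin m) : En n := WithLp.toLp 2 (fun k => y (i, k))

/-- The product-type Sobolev norm `‖f‖_{W^{(s₁,…,s_m)}}`, interpreted as `∞`
if `f ∉ L²`. -/
def sobolevNorm {m n : ℕ} (s : Fin m → ℝ) (f : Emn m n → ℂ) : ℝ≥0∞ :=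
  if MemLp f 2 volume then
    (∫⁻ y : Emn m n, (‖𝓕 f y‖₊ : ℝ≥0∞) ^ (2 : ℕ) *
      ∏ i : Fin m, ENNReal.ofReal ((1 + ‖comp y i‖ ^ 2) ^ (s i)) ∂volume) ^ (1 / 2 : ℝ)
  else ∞

/-- `A = sup_{j ∈ ℤ} ‖σ(2^j ·) ψ̂‖_{W^{(s₁,…,s_m)}}`. -/
def multNorm {m n : ℕ} (ψ : 𝓢(Emn m n, ℂ)) (s : Fin m → ℝ) (σ : Emn m n → ℂ) : ℝ≥0∞ :=
  ⨆ j : ℤ, sobolevNorm s (fun ξ => σ ((2 : ℝ) ^ j • ξ) * 𝓕 (⇑ψ) ξ)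

/-- `ψ̂` is supported in the annulus `1/2 ≤ |ξ| ≤ 2` and `Σ_{j∈ℤ} ψ̂(2^{-j} ξ) = 1`
for `ξ ≠ 0`. -/
def goodPsi {m n : ℕ} (ψ : 𝓢(Emn m n, ℂ)) : Prop :=
  (∀ ξ : Emn m n, 𝓕 (⇑ψ) ξ ≠ 0 → 1 / 2 ≤ ‖ξ‖ ∧ ‖ξ‖ ≤ 2) ∧
  ∀ ξ : Emn m n, ξ ≠ 0 → ∑' j : ℤ, 𝓕 (⇑ψ) ((2 : ℝ) ^ (-j) • ξ) = 1

/-- The phase factor `e^{2πi x·(ξ₁ + ⋯ + ξ_m)}`. -/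
def phase {m n : ℕ} (x : En n) (ξ : Emn m n) : ℂ :=
  Complex.exp (2 * (Real.pi : ℂ) * Complex.I * ((∑ i : Fin m, (inner ℝ x (comp ξ i) : ℝ) : ℝ) : ℂ))

/-- The `m`-linear Fourier multiplier operator `T_σ`. -/
def Tmul {m n : ℕ} (σ : Emn m n → ℂ) (f : Fin m → En n → ℂ) (x : En n) : ℂ :=
  ∫ ξ : Emn m n, phase x ξ * (σ ξ * ∏ i : Fin m, 𝓕 (f i) (comp ξ i))

/-- The Hardy space quasinorm `‖f‖_{H^p} = ‖sup_{t>0} |Φ_t * f|‖_{L^p}`, `0 < p ≤ 1`. -/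
def hardyNorm {n : ℕ} (Φ : 𝓢(En n, ℂ)) (p : ℝ) (f : En n → ℂ) : ℝ≥0∞ :=
  (∫⁻ x : En n, (⨆ t : Set.Ioi (0 : ℝ),
      (‖∫ y : En n, ((t : ℝ) ^ (-(n : ℝ))) • Φ ((t : ℝ)⁻¹ • (x - y)) * f y‖₊ : ℝ≥0∞)) ^ p
    ∂volume) ^ (1 / p)

/-- `‖f‖_{H^p}` for `0 < p ≤ ∞`: the Hardy quasinorm for `p ≤ 1` and the Lebesgue
norm for `p > 1`. -/
def hNorm {n : ℕ} (Φ : 𝓢(En n, ℂ)) (p : ℝ≥0∞) (f : En n → ℂ) : ℝ≥0∞ :=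
  if p ≤ 1 then hardyNorm Φ p.toReal f else eLpNorm f p volume

/-- A bounded measurable function. -/
def BddMeas {α : Type*} [MeasurableSpace α] (σ : α → ℂ) : Prop :=
  Measurable σ ∧ ∃ M : ℝ, ∀ x, ‖σ x‖ ≤ M

/-- The axis-parallel closed cube with center `c` and side length `h`. -/
def cube {n : ℕ} (c : En n) (h : ℝ) : Set (En n) := {x | ∀ k, |x k - c k| ≤ h / 2}




lemma GK_mem_cube {n : ℕ} {c x : En n} {h : ℝ} : x ∈ cube c h ↔ ∀ k, |x k - c k| ≤ h / 2 :=
  Iff.rfl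

lemma GK_cube_measurableSet {n : ℕ} (c : En n) (h : ℝ) : MeasurableSet (cube c h) := by
  have e : cube c h = ⋂ k, {x : En n | |x k - c k| ≤ h / 2} := by
    ext x; simp [cube]
  rw [e]
  refine MeasurableSet.iInter fun k => ?_
  have hm : Measurable fun x : En n => |x k - c k| :=
    (((measurable_pi_apply k : Measurable fun x : Fin n → ℝ => x k).comp (WithLp.measurable_ofLp 2 (Fin n → ℝ))).sub measurable_const).abs
  exact measurableSet_le hm measurable_const

lemma GK_cube_subset_cube_same_center {n : ℕ} (c : En n) {h h' : ℝ} (hh : h ≤ h') :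
    cube c h ⊆ cube c h' := fun x hx k => le_trans (hx k) (by linarith)

lemma GK_volume_cube {n : ℕ} (c : En n) {h : ℝ} (hh : 0 ≤ h) :
    volume (cube c h) = ENNReal.ofReal (h ^ n) := by
  have e : cube c h = (MeasurableEquiv.toLp 2 (Fin n → ℝ)).symm ⁻¹'
      (Set.pi Set.univ fun k => Icc (c k - h / 2) (c k + h / 2)) := by
    ext x
    simp only [cube, mem_setOf_eq, mem_preimage, Set.mem_pi, mem_univ, forall_true_left,
      mem_Icc, abs_le, MeasurableEquiv.toLp_symm_apply]
    constructor
    · exact fun hk k => ⟨by linarith [(hk k).1], by linarith [(hk k).2]⟩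
    · exact fun hk k => ⟨by linarith [(hk k).1], by linarith [(hk k).2]⟩
  rw [e, (EuclideanSpace.volume_preserving_symm_measurableEquiv_toLp (Fin n)).measure_preimage
    ((MeasurableSet.univ_pi fun k => measurableSet_Icc).nullMeasurableSet)]
  rw [volume_pi_pi]
  have hv : ∀ k : Fin n, volume (Icc (c k - h / 2) (c k + h / 2)) = ENNReal.ofReal h := by
    intro k; rw [Real.volume_Icc]; ring_nf
  simp only [hv, Finset.prod_const, Finset.card_univ, Fintype.card_fin]
  exact (ENNReal.ofReal_pow hh n).symm




lemma GK_one_le_sqrt_n {n : ℕ} (hn : 0 < n) : (1 : ℝ) ≤ Real.sqrt n := by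
  rw [show (1:ℝ) = Real.sqrt 1 by simp]
  exact Real.sqrt_le_sqrt (by exact_mod_cast hn)

lemma GK_cube_subset_dilate {n : ℕ} (hn : 0 < n) {ci cj : En n} {hi hj d : ℝ}
    (hd : ∀ k, |cj k - ci k| ≤ d) (hsum : d + hj / 2 ≤ hi) (hi0 : 0 ≤ hi) :
    cube cj hj ⊆ cube ci (2 * Real.sqrt n * hi) := by
  intro z hz k
  have h1 : |z k - ci k| ≤ |z k - cj k| + |cj k - ci k| := abs_sub_le _ _ _
  have h2 : 2 * Real.sqrt ↑n * hi / 2 = Real.sqrt ↑n * hi := by ring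
  rw [h2]
  have hs := GK_one_le_sqrt_n hn
  calc |z k - ci k| ≤ hj / 2 + d := by linarith [hz k, hd k]
    _ ≤ hi := by linarith
    _ ≤ Real.sqrt ↑n * hi := by nlinarith

lemma GK_selection {n : ℕ} (hn : 0 < n) {ι : Type} (J : Finset ι)
    (c : ι → En n) (h : ι → ℝ) (hpos : ∀ i, 0 < h i)
    (x : En n) (hx : ∀ j ∈ J, x ∈ cube (c j) (h j))
    (w : ι → ℝ≥0∞) (t : ℝ≥0∞)
    (hyp : ∀ j ∈ J, ∃ z ∈ cube (c j) (h j),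
      ∑ i ∈ J.filter (fun i => z ∈ cube (c i) (2 * Real.sqrt n * h i)), w i < t) :
    ∑ j ∈ J, w j ≤ (4 ^ n + 1 : ℕ) * t := by
  rcases J.eq_empty_or_nonempty with hJ | hne
  · simp [hJ]
  obtain ⟨j0, hj0J, hj0min⟩ := J.exists_min_image h hne
  have hm0 : 0 < h j0 := hpos j0
  set κ : ι → Option (Fin n → ℤ) :=
    fun j => if h j < 2 * h j0 then some (fun k => ⌊(c j k - x k) / (h j0 / 2)⌋) else none with hκ
  -- each fiber sum is ≤ t
  have fiber_le : ∀ v ∈ J.image κ, ∑ j ∈ J.filter (fun j => κ j = v), w j ≤ t := by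
    intro v hv
    -- find a "GK_core" cube j1 ∈ J such that every member i of the fiber satisfies
    -- cube (c j1) (h j1) ⊆ cube (c i) (2√n h i)
    have key : ∃ j1 ∈ J, ∀ i ∈ J.filter (fun j => κ j = v),
        cube (c j1) (h j1) ⊆ cube (c i) (2 * Real.sqrt n * h i) := by
      rcases v with _ | u
      · refine ⟨j0, hj0J, fun i hi => ?_⟩
        rw [Finset.mem_filter] at hi
        obtain ⟨hiJ, hiv⟩ := hi
        have hbig : 2 * h j0 ≤ h i := by
          by_contra hcon
          simp only [hκ, if_pos (lt_of_not_ge hcon)] at hiv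
          exact Option.some_ne_none _ hiv
        refine GK_cube_subset_dilate hn (d := h j0 / 2 + h i / 2) (fun k => ?_) (by linarith)
          (le_of_lt (hpos i))
        calc |c j0 k - c i k| ≤ |c j0 k - x k| + |x k - c i k| := abs_sub_le _ _ _
          _ ≤ h j0 / 2 + h i / 2 := by
              have h1 := (hx j0 hj0J) k
              have h2 := (hx i hiJ) k
              rw [abs_sub_comm] at h1
              linarith
      · -- small cubes fiber: pick the minimal one in the fiber
        have hfne : (J.filter (fun j => κ j = some u)).Nonempty := by
          rw [Finset.mem_image] at hv
          obtain ⟨j, hjJ, hjv⟩ := hv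
          exact ⟨j, Finset.mem_filter.2 ⟨hjJ, hjv⟩⟩
        obtain ⟨j1, hj1f, hj1min⟩ := (J.filter (fun j => κ j = some u)).exists_min_image h hfne
        have hj1J : j1 ∈ J := (Finset.mem_filter.1 hj1f).1
        refine ⟨j1, hj1J, fun i hi => ?_⟩
        have hiJ : i ∈ J := (Finset.mem_filter.1 hi).1
        have hsome : ∀ j, κ j = some u → ∀ k, u k = ⌊(c j k - x k) / (h j0 / 2)⌋ := by
          intro j hj
          simp only [hκ] at hj
          split_ifs at hj with hc
          exact fun k => (congrFun (Option.some_injective _ hj) k).symm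
        have hflr : ∀ k, ⌊(c j1 k - x k) / (h j0 / 2)⌋ = ⌊(c i k - x k) / (h j0 / 2)⌋ := by
          intro k
          exact (hsome j1 (Finset.mem_filter.1 hj1f).2 k).symm.trans
            (hsome i (Finset.mem_filter.1 hi).2 k)
        refine GK_cube_subset_dilate hn (d := h j1 / 2) (fun k => ?_)
          (by linarith [hj1min i hi]) (le_of_lt (hpos i))
        have habs : |(c j1 k - x k) / (h j0 / 2) - (c i k - x k) / (h j0 / 2)| < 1 :=
          Int.abs_sub_lt_one_of_floor_eq_floor (hflr k)
        rw [div_sub_div_same] at habs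
        have hsub : c j1 k - x k - (c i k - x k) = c j1 k - c i k := by ring
        rw [hsub, abs_div, abs_of_pos (by linarith : (0:ℝ) < h j0 / 2), div_lt_one (by linarith)]
          at habs
        have : h j0 ≤ h j1 := hj0min j1 hj1J
        linarith
    obtain ⟨j1, hj1J, hsub⟩ := key
    obtain ⟨z, hz, hlt⟩ := hyp j1 hj1J
    refine le_trans (Finset.sum_le_sum_of_subset ?_) hlt.le
    intro i hi
    rw [Finset.mem_filter]
    exact ⟨(Finset.mem_filter.1 hi).1, hsub i hi hz⟩
  -- cardinality of the image
  have himcard : (J.image κ).card ≤ 4 ^ n + 1 := by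
    have hsubim : J.image κ ⊆
        insert none ((Fintype.piFinset fun _ : Fin n => Finset.Icc (-2 : ℤ) 1).image some) := by
      intro v hv
      rw [Finset.mem_image] at hv
      obtain ⟨j, hjJ, hjv⟩ := hv
      simp only [hκ] at hjv
      split_ifs at hjv with hsmall
      · subst hjv
        refine Finset.mem_insert_of_mem (Finset.mem_image_of_mem some ?_)
        rw [Fintype.mem_piFinset]
        intro k
        rw [Finset.mem_Icc]
        have hb : |c j k - x k| < h j0 := by
          have h1 := (hx j hjJ) k
          rw [abs_sub_comm] at h1
          have : h j / 2 < h j0 := by linarith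
          linarith [abs_nonneg (c j k - x k)]
        have hd2 : (0:ℝ) < h j0 / 2 := by linarith
        constructor
        · rw [Int.le_floor, le_div_iff₀ hd2]
          push_cast
          have := neg_lt_of_abs_lt hb
          linarith
        · have hlt2 : ⌊(c j k - x k) / (h j0 / 2)⌋ < 2 := by
            rw [Int.floor_lt, div_lt_iff₀ hd2]
            push_cast
            have := lt_of_abs_lt hb
            linarith
          omega
      · subst hjv; exact Finset.mem_insert_self _ _
    calc (J.image κ).card ≤ _ := Finset.card_le_card hsubim
      _ ≤ ((Fintype.piFinset fun _ : Fin n => Finset.Icc (-2 : ℤ) 1).image some).card + 1 :=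
          Finset.card_insert_le _ _
      _ ≤ 4 ^ n + 1 := by
          have h1 : ((Fintype.piFinset fun _ : Fin n => Finset.Icc (-2 : ℤ) 1).image some).card
              ≤ (Fintype.piFinset fun _ : Fin n => Finset.Icc (-2 : ℤ) 1).card :=
            Finset.card_image_le
          have h2 : (Fintype.piFinset fun _ : Fin n => Finset.Icc (-2 : ℤ) 1).card = 4 ^ n := by
            rw [Fintype.card_piFinset]
            simp [Int.card_Icc]
          omega
  calc ∑ j ∈ J, w j
      = ∑ v ∈ J.image κ, ∑ j ∈ J.filter (fun j => κ j = v), w j :=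
        (Finset.sum_fiberwise_of_maps_to (fun j hj => Finset.mem_image_of_mem κ hj) w).symm
    _ ≤ ∑ _v ∈ J.image κ, t := Finset.sum_le_sum fiber_le
    _ = (J.image κ).card * t := by rw [Finset.sum_const, nsmul_eq_mul]
    _ ≤ (4 ^ n + 1 : ℕ) * t := by
        exact mul_le_mul_left (by exact_mod_cast Nat.cast_le.2 himcard) t





lemma GK_tail_integral {p : ℝ} (hp0 : 0 < p) (hp1 : p < 1) {s : ℝ} (hs : 0 < s) :
    ∫⁻ t in Ioi s, ENNReal.ofReal ((1 - p) * t ^ (p - 2)) = ENNReal.ofReal (s ^ (p - 1)) := by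
  have hint : IntegrableOn (fun t : ℝ => (1 - p) * t ^ (p - 2)) (Ioi s) := by
    exact (integrableOn_Ioi_rpow_of_lt (by linarith) hs).const_mul _
  rw [← ofReal_integral_eq_lintegral_ofReal hint ?_]
  · rw [integral_const_mul, integral_Ioi_rpow_of_lt (by linarith) hs]
    congr 1
    have h2 : p - 2 + 1 = p - 1 := by ring
    rw [h2]
    have hne : p - 1 ≠ 0 := by linarith
    field_simp
    ring
  · filter_upwards [ae_restrict_mem measurableSet_Ioi] with t ht
    have h3 : (0:ℝ) < t := lt_trans hs ht
    exact mul_nonneg (by linarith) (Real.rpow_nonneg h3.le _)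

lemma GK_rpow_le_tail {p : ℝ} (hp0 : 0 < p) (hp1 : p < 1) {w : ℝ≥0∞} (hw : w ≠ 0) :
    w ^ (p - 1) ≤ ∫⁻ t in Ioi (0:ℝ),
      (if w < ENNReal.ofReal t then ENNReal.ofReal ((1 - p) * t ^ (p - 2)) else 0) := by
  rcases eq_or_ne w ⊤ with hT | hT
  · rw [hT, ENNReal.top_rpow_of_neg (by linarith)]
    exact zero_le
  set wr := w.toReal with hwr
  have hwr0 : 0 < wr := ENNReal.toReal_pos hw hT
  have heq : ∫⁻ t in Ioi (0:ℝ),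
      (if w < ENNReal.ofReal t then ENNReal.ofReal ((1 - p) * t ^ (p - 2)) else 0)
      = ∫⁻ t in Ioi wr, ENNReal.ofReal ((1 - p) * t ^ (p - 2)) := by
    rw [setLIntegral_congr_fun (f := fun t =>
        (if w < ENNReal.ofReal t then ENNReal.ofReal ((1 - p) * t ^ (p - 2)) else 0))
        (g := fun t => (Ioi wr).indicator (fun t => ENNReal.ofReal ((1 - p) * t ^ (p - 2))) t)
        measurableSet_Ioi ?_]
    · rw [lintegral_indicator measurableSet_Ioi, Measure.restrict_restrict measurableSet_Ioi,
        Set.inter_eq_left.2 (Ioi_subset_Ioi hwr0.le)]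
    · intro t ht
      have hiff : w < ENNReal.ofReal t ↔ t ∈ Ioi wr := by
        rw [ENNReal.lt_ofReal_iff_toReal_lt hT, mem_Ioi, ← hwr]
      by_cases hc : w < ENNReal.ofReal t
      · simp only [if_pos hc, Set.indicator_of_mem (hiff.1 hc)]
      · simp only [if_neg hc, Set.indicator_of_notMem (fun hm => hc (hiff.2 hm))]
  rw [heq, GK_tail_integral hp0 hp1 hwr0]
  have hw2 : w = ENNReal.ofReal wr := (ENNReal.ofReal_toReal hT).symm
  rw [hw2, ENNReal.ofReal_rpow_of_pos hwr0]

lemma GK_head_integral {p : ℝ} (hp0 : 0 < p) (hp1 : p < 1) {s K : ℝ} (hs : 0 < s) (hK : 0 ≤ K) :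
    ∫⁻ t in Ioc (0:ℝ) s, ENNReal.ofReal ((1 - p) * K * t ^ (p - 1))
      = ENNReal.ofReal ((1 - p) * K * (s ^ p / p)) := by
  have hint : IntegrableOn (fun t : ℝ => (1 - p) * K * t ^ (p - 1)) (Ioc 0 s) := by
    have h4 := (intervalIntegral.intervalIntegrable_rpow' (a := 0) (b := s)
      (r := p - 1) (by linarith)).const_mul ((1 - p) * K)
    exact (intervalIntegrable_iff_integrableOn_Ioc_of_le hs.le).1 h4
  rw [← ofReal_integral_eq_lintegral_ofReal hint ?_]
  · congr 1
    rw [← intervalIntegral.integral_of_le hs.le]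
    rw [intervalIntegral.integral_const_mul, integral_rpow (Or.inl (by linarith))]
    have h1 : p - 1 + 1 = p := by ring
    rw [h1, Real.zero_rpow (ne_of_gt hp0)]
    ring
  · filter_upwards [ae_restrict_mem measurableSet_Ioc] with t ht
    have h5 : (0:ℝ) < t := ht.1
    exact mul_nonneg (mul_nonneg (by linarith) hK) (Real.rpow_nonneg h5.le _)

lemma GK_t_calc {p : ℝ} (hp0 : 0 < p) (hp1 : p < 1) {K : ℝ} (hK : 1 ≤ K) {a : ℝ≥0∞} (ha : a ≠ ⊤) :
    ∫⁻ t in Ioi (0:ℝ), ENNReal.ofReal ((1 - p) * t ^ (p - 2)) * min a (ENNReal.ofReal (K * t))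
      ≤ ENNReal.ofReal (K ^ (1 - p) / p) * a ^ p := by
  have hK0 : (0:ℝ) < K := lt_of_lt_of_le one_pos hK
  rcases eq_or_ne a 0 with ha0 | ha0
  · subst ha0
    have hmin : ∀ x : ℝ≥0∞, min 0 x = 0 := fun x => by simp
    simp only [hmin, mul_zero, lintegral_zero]
    exact zero_le
  set ar := a.toReal with har
  have har0 : 0 < ar := ENNReal.toReal_pos ha0 ha
  set s := ar / K with hsdef
  have hs0 : 0 < s := by positivity
  rw [← Ioc_union_Ioi_eq_Ioi hs0.le, lintegral_union measurableSet_Ioi (Ioc_disjoint_Ioi le_rfl)]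
  have piece1 : ∫⁻ t in Ioc (0:ℝ) s,
      ENNReal.ofReal ((1 - p) * t ^ (p - 2)) * min a (ENNReal.ofReal (K * t))
      ≤ ENNReal.ofReal ((1 - p) * K * (s ^ p / p)) := by
    rw [← GK_head_integral hp0 hp1 hs0 hK0.le]
    refine setLIntegral_mono (by fun_prop) fun t ht => ?_
    have ht0 : (0:ℝ) < t := ht.1
    calc ENNReal.ofReal ((1 - p) * t ^ (p - 2)) * min a (ENNReal.ofReal (K * t))
        ≤ ENNReal.ofReal ((1 - p) * t ^ (p - 2)) * ENNReal.ofReal (K * t) :=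
          mul_le_mul_right (min_le_right _ _) _
      _ = ENNReal.ofReal ((1 - p) * K * t ^ (p - 1)) := by
          rw [← ENNReal.ofReal_mul (mul_nonneg (by linarith) (Real.rpow_nonneg ht0.le _))]
          congr 1
          have h6 : t ^ (p - 1) = t ^ (p - 2) * t := by
            rw [show p - 1 = p - 2 + 1 by ring, Real.rpow_add ht0, Real.rpow_one]
          rw [h6]; ring
  have piece2 : ∫⁻ t in Ioi s,
      ENNReal.ofReal ((1 - p) * t ^ (p - 2)) * min a (ENNReal.ofReal (K * t))
      ≤ ENNReal.ofReal (s ^ (p - 1) * ar) := by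
    calc ∫⁻ t in Ioi s, ENNReal.ofReal ((1 - p) * t ^ (p - 2)) * min a (ENNReal.ofReal (K * t))
        ≤ ∫⁻ t in Ioi s, ENNReal.ofReal ((1 - p) * t ^ (p - 2)) * a :=
          setLIntegral_mono (by fun_prop) fun t ht => mul_le_mul_right (min_le_left _ _) _
      _ = (∫⁻ t in Ioi s, ENNReal.ofReal ((1 - p) * t ^ (p - 2))) * a :=
          lintegral_mul_const' a _ ha
      _ = ENNReal.ofReal (s ^ (p - 1)) * a := by rw [GK_tail_integral hp0 hp1 hs0]
      _ = ENNReal.ofReal (s ^ (p - 1) * ar) := by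
          rw [ENNReal.ofReal_mul (Real.rpow_nonneg hs0.le _), ENNReal.ofReal_toReal ha]
  calc _ ≤ ENNReal.ofReal ((1 - p) * K * (s ^ p / p)) + ENNReal.ofReal (s ^ (p - 1) * ar) :=
        add_le_add piece1 piece2
    _ = ENNReal.ofReal ((1 - p) * K * (s ^ p / p) + s ^ (p - 1) * ar) :=
        (ENNReal.ofReal_add (mul_nonneg (mul_nonneg (by linarith) hK0.le)
          (div_nonneg (Real.rpow_nonneg hs0.le _) hp0.le))
          (mul_nonneg (Real.rpow_nonneg hs0.le _) har0.le)).symm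
    _ ≤ ENNReal.ofReal (K ^ (1 - p) / p) * a ^ p := by
        rw [show a = ENNReal.ofReal ar from (ENNReal.ofReal_toReal ha).symm,
          ENNReal.ofReal_rpow_of_pos har0, ← ENNReal.ofReal_mul (by positivity)]
        refine ENNReal.ofReal_le_ofReal (le_of_eq ?_)
        have e1 : s ^ p = ar ^ p * (K ^ p)⁻¹ := by
          rw [hsdef, Real.div_rpow har0.le hK0.le, div_eq_mul_inv]
        have e2 : s ^ (p - 1) * ar = ar ^ p * K ^ (1 - p) := by
          rw [hsdef, Real.div_rpow har0.le hK0.le]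
          rw [show (1 - p) = -(p - 1) by ring, Real.rpow_neg hK0.le]
          rw [div_eq_mul_inv, mul_comm (ar ^ (p-1)) _, mul_assoc,
            ← Real.rpow_add_one (ne_of_gt har0), show p - 1 + 1 = p by ring]
          ring
        have e3 : K * (K ^ p)⁻¹ = K ^ (1 - p) := by
          rw [show (1 - p) = -(p - 1) by ring, Real.rpow_neg hK0.le,
            Real.rpow_sub hK0, Real.rpow_one]
          field_simp
        rw [e1, e2, show (1 - p) * K * (ar ^ p * (K ^ p)⁻¹ / p)
            = (1 - p) / p * (ar ^ p * (K * (K ^ p)⁻¹)) from by ring, e3]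
        field_simp
        ring

lemma GK_ennreal_rpow_antitone {z w : ℝ≥0∞} (hzw : z ≤ w) {q : ℝ} (hq : q ≤ 0) :
    w ^ q ≤ z ^ q := by
  have h1 : w ^ q = (w ^ (-q))⁻¹ := by rw [← ENNReal.rpow_neg, neg_neg]
  have h2 : z ^ q = (z ^ (-q))⁻¹ := by rw [← ENNReal.rpow_neg, neg_neg]
  rw [h1, h2]
  exact ENNReal.inv_le_inv.2 (ENNReal.rpow_le_rpow hzw (neg_nonneg.2 hq))

lemma GK_core {n : ℕ} (hn : 0 < n) {p : ℝ} (hp0 : 0 < p) (hp1 : p ≤ 1)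
    (ι : Type) (hcnt : Countable ι) (c : ι → En n) (h : ι → ℝ) (f : ι → En n → ℝ)
    (hpos : ∀ i, 0 < h i) (hint : ∀ i, Integrable (f i) volume)
    (hnn : ∀ i x, 0 ≤ f i x) (hsupp : ∀ i, support (f i) ⊆ cube (c i) (h i)) :
    (∫⁻ x : En n, (∑' i : ι, ENNReal.ofReal (f i x)) ^ p ∂volume) ^ (1 / p) ≤
      ENNReal.ofReal (((4:ℝ) ^ n + 1) / p) *
        (∫⁻ x : En n,
            (∑' i : ι,
              ENNReal.ofReal ((1 / h i ^ n) * ∫ z in cube (c i) (h i), f i z) *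
                (cube (c i) (2 * Real.sqrt n * h i)).indicator
                  (fun _ => (1 : ℝ≥0∞)) x) ^ p ∂volume) ^ (1 / p) := by
  classical
  haveI : Countable ι := hcnt
  set Kr : ℝ := (4:ℝ) ^ n + 1 with hKrdef
  have hKr1 : (1:ℝ) ≤ Kr := by
    have h4n : (0:ℝ) ≤ 4 ^ n := by positivity
    rw [hKrdef]; linarith
  have hKr0 : (0:ℝ) < Kr := by positivity
  set Q : ι → Set (En n) := fun i => cube (c i) (h i) with hQdef
  set Qs : ι → Set (En n) := fun i => cube (c i) (2 * Real.sqrt n * h i) with hQsdef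
  set Cc : ι → ℝ≥0∞ :=
    fun i => ENNReal.ofReal ((1 / h i ^ n) * ∫ z in Q i, f i z) with hCcdef
  set G : En n → ℝ≥0∞ := fun x => ∑' i, Cc i * (Qs i).indicator (fun _ => (1:ℝ≥0∞)) x with hGdef
  set F : En n → ℝ≥0∞ := fun x => ∑' i, ENNReal.ofReal (f i x) with hFdef
  show (∫⁻ x, F x ^ p) ^ (1/p) ≤ ENNReal.ofReal (Kr / p) * (∫⁻ x, G x ^ p) ^ (1/p)
  -- basic facts
  have hQm : ∀ i, MeasurableSet (Q i) := fun i => GK_cube_measurableSet _ _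
  have hQsm : ∀ i, MeasurableSet (Qs i) := fun i => GK_cube_measurableSet _ _
  have hQsub : ∀ i, Q i ⊆ Qs i := by
    intro i
    refine GK_cube_subset_cube_same_center _ ?_
    have h1 := GK_one_le_sqrt_n hn
    nlinarith [hpos i]
  have hGmeas : Measurable G :=
    Measurable.ennreal_tsum fun i => (measurable_const.indicator (hQsm i)).const_mul _
  have hFmeas : AEMeasurable F volume :=
    AEMeasurable.ennreal_tsum fun i =>
      ENNReal.measurable_ofReal.comp_aemeasurable (hint i).aemeasurable
  have hCcT : ∀ i, Cc i ≠ ⊤ := fun i => ENNReal.ofReal_ne_top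
  have hGge : ∀ i, ∀ x ∈ Q i, Cc i ≤ G x := by
    intro i x hx
    have h1 : Cc i * (Qs i).indicator (fun _ => (1:ℝ≥0∞)) x = Cc i := by
      rw [indicator_of_mem (hQsub i hx)]
      exact mul_one _
    calc Cc i = Cc i * (Qs i).indicator (fun _ => (1:ℝ≥0∞)) x := h1.symm
      _ ≤ G x := ENNReal.le_tsum i
  have hind : ∀ i, (fun x => ENNReal.ofReal (f i x))
      = (Q i).indicator (fun x => ENNReal.ofReal (f i x)) := by
    intro i
    funext x
    by_cases hx : x ∈ Q i
    · rw [indicator_of_mem hx]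
    · rw [indicator_of_notMem hx]
      have hz : f i x = 0 := by
        by_contra hne
        exact hx (hsupp i hne)
      rw [hz, ENNReal.ofReal_zero]
  set A : ι → ℝ≥0∞ := fun i => ∫⁻ x, ENNReal.ofReal (f i x) with hAdef
  have hInn : ∀ i, (0:ℝ) ≤ ∫ z in Q i, f i z :=
    fun i => setIntegral_nonneg (hQm i) fun z _ => hnn i z
  have hA : ∀ i, A i = Cc i * ENNReal.ofReal (h i ^ n) := by
    intro i
    have h1 : A i = ∫⁻ x in Q i, ENNReal.ofReal (f i x) := by
      conv_lhs => rw [show A i = ∫⁻ x, ENNReal.ofReal (f i x) from rfl, hind i]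
      exact lintegral_indicator (hQm i) _
    have h2 : ∫⁻ x in Q i, ENNReal.ofReal (f i x) = ENNReal.ofReal (∫ z in Q i, f i z) :=
      (ofReal_integral_eq_lintegral_ofReal (hint i).integrableOn
        (Filter.Eventually.of_forall fun z => hnn i z)).symm
    rw [h1, h2, hCcdef]
    rw [← ENNReal.ofReal_mul]
    · congr 1
      have hh : h i ^ n ≠ 0 := pow_ne_zero _ (hpos i).ne'
      field_simp
    · have hh : (0:ℝ) < h i ^ n := pow_pos (hpos i) n
      have h3 := hInn i
      positivity
  have hAvol : ∀ i, A i = Cc i * volume (Q i) := by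
    intro i
    rw [hA i, hQdef, GK_volume_cube _ (hpos i).le]
  have hAT : ∀ i, A i ≠ ⊤ := by
    intro i
    rw [hA i]
    exact ENNReal.mul_ne_top (hCcT i) ENNReal.ofReal_ne_top
  -- p = 1 case
  rcases eq_or_lt_of_le hp1 with hp1' | hp1'
  · have e1 : ∫⁻ x, F x ^ p = ∫⁻ x, F x := by
      apply lintegral_congr
      intro x
      rw [hp1', ENNReal.rpow_one]
    have e2 : ∫⁻ x, G x ^ p = ∫⁻ x, G x := by
      apply lintegral_congr
      intro x
      rw [hp1', ENNReal.rpow_one]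
    rw [e1, e2, hp1', one_div_one, ENNReal.rpow_one, ENNReal.rpow_one]
    have hFG : ∫⁻ x, F x ≤ ∫⁻ x, G x := by
      have hFeq : ∫⁻ x, F x = ∑' i, A i := by
        rw [hFdef]
        exact lintegral_tsum fun i =>
          ENNReal.measurable_ofReal.comp_aemeasurable (hint i).aemeasurable
      have hGeq : ∫⁻ x, G x = ∑' i, Cc i * volume (Qs i) := by
        rw [hGdef]
        rw [lintegral_tsum fun i =>
          ((measurable_const.indicator (hQsm i)).const_mul _).aemeasurable]
        congr 1
        funext i
        rw [lintegral_const_mul' _ _ (hCcT i), lintegral_indicator (hQsm i), setLIntegral_one]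
      rw [hFeq, hGeq]
      refine ENNReal.tsum_le_tsum fun i => ?_
      rw [hAvol i]
      exact mul_le_mul_right (measure_mono (hQsub i)) _
    refine le_trans hFG ?_
    have h1K : (1:ℝ≥0∞) ≤ ENNReal.ofReal (Kr / 1) := by
      rw [div_one, show (1:ℝ≥0∞) = ENNReal.ofReal 1 by simp]
      exact ENNReal.ofReal_le_ofReal hKr1
    exact le_mul_of_one_le_left (zero_le) h1K
  -- p < 1 case
  rcases eq_or_ne (∫⁻ x, G x ^ p) ⊤ with hGtop | hGtop
  · rw [hGtop, ENNReal.top_rpow_of_pos (by positivity : (0:ℝ) < 1/p), ENNReal.mul_top]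
    · exact le_top
    · refine (ENNReal.ofReal_pos.2 ?_).ne'
      positivity
  have hGaelt : ∀ᵐ x, G x < ⊤ := by
    have h1 : ∀ᵐ x, G x ^ p < ⊤ := ae_lt_top (hGmeas.pow_const p) hGtop
    filter_upwards [h1] with x hx
    by_contra hcon
    rw [not_lt, top_le_iff] at hcon
    rw [hcon, ENNReal.top_rpow_of_pos hp0] at hx
    exact absurd hx (lt_irrefl _)
  set m : ι → ℝ≥0∞ := fun i => essInf G (volume.restrict (Q i)) with hmdef
  have hmCc : ∀ i, Cc i ≤ m i := by
    intro i
    refine le_essInf_of_ae_le _ ?_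
    filter_upwards [ae_restrict_mem (hQm i)] with x hx
    exact hGge i x hx
  -- pointwise GK_selection bound
  have hPW : ∀ (T : ℝ≥0∞) (x : En n),
      (∑' j, (if x ∈ Q j ∧ m j < T then Cc j else 0)) ≤ (4 ^ n + 1 : ℕ) * T := by
    intro T x
    rw [ENNReal.tsum_eq_iSup_sum]
    refine iSup_le fun s => ?_
    rw [← Finset.sum_filter]
    refine GK_selection hn (s.filter (fun j => x ∈ Q j ∧ m j < T)) c h hpos x ?_ Cc T ?_
    · intro j hj
      exact ((Finset.mem_filter.1 hj).2).1
    · intro j hj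
      have hmj : m j < T := ((Finset.mem_filter.1 hj).2).2
      have h2 : (volume.restrict (Q j)) {y | G y < T} ≠ 0 := by
        intro hzero
        have hae : ∀ᵐ y ∂(volume.restrict (Q j)), T ≤ G y := by
          rw [Filter.eventually_iff, mem_ae_iff]
          have hcset : {y : En n | T ≤ G y}ᶜ = {y | G y < T} := by
            ext y; simp [not_le]
          rw [hcset]
          exact hzero
        exact absurd (le_essInf_of_ae_le _ hae) (not_le.2 hmj)
      have h4 : volume ({y | G y < T} ∩ Q j) ≠ 0 := by
        rw [← Measure.restrict_apply (measurableSet_lt hGmeas measurable_const)]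
        exact h2
      obtain ⟨z, hz1, hz2⟩ := nonempty_of_measure_ne_zero h4
      refine ⟨z, hz2, ?_⟩
      refine lt_of_le_of_lt ?_ hz1
      have h6 : ∀ i ∈ (s.filter (fun j => x ∈ Q j ∧ m j < T)).filter
          (fun i => z ∈ cube (c i) (2 * Real.sqrt n * h i)),
          Cc i = Cc i * (Qs i).indicator (fun _ => (1:ℝ≥0∞)) z := by
        intro i hi
        rw [indicator_of_mem ((Finset.mem_filter.1 hi).2), mul_one]
      rw [Finset.sum_congr rfl h6]
      exact ENNReal.sum_le_tsum _
  -- Key 3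
  have hrhomeas : Measurable fun t : ℝ => ENNReal.ofReal ((1-p) * t ^ (p-2)) :=
    ENNReal.measurable_ofReal.comp ((measurable_id.pow_const _).const_mul _)
  have hΨmeas : Measurable (Function.uncurry fun (t : ℝ) (x : En n) =>
      ENNReal.ofReal ((1-p) * t ^ (p-2)) * min (G x) (ENNReal.ofReal (Kr * t))) := by
    refine Measurable.mul ?_ ?_
    · exact hrhomeas.comp measurable_fst
    · refine Measurable.min (hGmeas.comp measurable_snd) ?_
      exact ENNReal.measurable_ofReal.comp ((measurable_fst).const_mul Kr)
  have hKey3 : ∑' i, A i * m i ^ (p-1)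
      ≤ ENNReal.ofReal (Kr ^ (1-p) / p) * ∫⁻ x, G x ^ p := by
    have ha : ∀ i, A i * m i ^ (p-1) ≤
        ∫⁻ t in Ioi (0:ℝ), ENNReal.ofReal ((1-p) * t ^ (p-2)) *
          (if m i < ENNReal.ofReal t then A i else 0) := by
      intro i
      rcases eq_or_ne (A i) 0 with hA0 | hA0
      · rw [hA0, zero_mul]
        exact zero_le
      · have hCc0 : Cc i ≠ 0 := by
          intro hcon
          rw [hA i, hcon, zero_mul] at hA0
          exact hA0 rfl
        have hm0 : m i ≠ 0 := by
          intro hcon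
          exact hCc0 (le_antisymm (hcon ▸ hmCc i) (zero_le))
        calc A i * m i ^ (p-1)
            ≤ A i * ∫⁻ t in Ioi (0:ℝ),
              (if m i < ENNReal.ofReal t then ENNReal.ofReal ((1-p) * t ^ (p-2)) else 0) :=
              mul_le_mul_right (GK_rpow_le_tail hp0 hp1' hm0) _
          _ = _ := by
              rw [← lintegral_const_mul' _ _ (hAT i)]
              apply lintegral_congr
              intro t
              by_cases hcon : m i < ENNReal.ofReal t
              · rw [if_pos hcon, if_pos hcon, mul_comm]
              · rw [if_neg hcon, if_neg hcon, mul_zero, mul_zero]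
    have hb : ∑' i, A i * m i ^ (p-1) ≤
        ∫⁻ t in Ioi (0:ℝ), ENNReal.ofReal ((1-p) * t ^ (p-2)) *
          (∑' i, (if m i < ENNReal.ofReal t then A i else 0)) := by
      refine le_trans (ENNReal.tsum_le_tsum ha) ?_
      rw [← lintegral_tsum]
      · apply lintegral_mono
        intro t
        exact le_of_eq ENNReal.tsum_mul_left
      · intro i
        refine (Measurable.mul hrhomeas ?_).aemeasurable
        refine Measurable.ite ?_ measurable_const measurable_const
        exact ENNReal.measurable_ofReal measurableSet_Ioi
    have hc : ∀ T : ℝ≥0∞, (∑' i, (if m i < T then A i else 0))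
        ≤ ∫⁻ x, min (G x) ((4 ^ n + 1 : ℕ) * T) := by
      intro T
      have h1 : ∀ i, (if m i < T then A i else 0)
          = ∫⁻ x, (if x ∈ Q i ∧ m i < T then Cc i else 0) := by
        intro i
        by_cases hc' : m i < T
        · rw [if_pos hc']
          have h2 : (fun x => if x ∈ Q i ∧ m i < T then Cc i else 0)
              = (Q i).indicator (fun _ => Cc i) := by
            funext x
            by_cases hx : x ∈ Q i
            · rw [if_pos ⟨hx, hc'⟩, indicator_of_mem hx]
            · rw [if_neg (fun hq => hx hq.1), indicator_of_notMem hx]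
          rw [h2, lintegral_indicator (hQm i), setLIntegral_const, hAvol i]
        · rw [if_neg hc']
          have h2 : (fun x => if x ∈ Q i ∧ m i < T then Cc i else 0)
              = fun _ => (0:ℝ≥0∞) := by
            funext x
            rw [if_neg (fun hq => hc' hq.2)]
          rw [h2, lintegral_zero]
      calc ∑' i, (if m i < T then A i else 0)
          = ∑' i, ∫⁻ x, (if x ∈ Q i ∧ m i < T then Cc i else 0) := tsum_congr h1
        _ = ∫⁻ x, ∑' i, (if x ∈ Q i ∧ m i < T then Cc i else 0) := by
            rw [← lintegral_tsum]
            intro i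
            have h3 : (fun x => if x ∈ Q i ∧ m i < T then Cc i else 0)
                = fun x => (Q i).indicator (fun _ => Cc i) x * (if m i < T then 1 else 0) := by
              funext x
              by_cases hx : x ∈ Q i <;> by_cases hml : m i < T <;>
                simp [hx, hml]
            rw [h3]
            exact ((measurable_const.indicator (hQm i)).mul_const _).aemeasurable
        _ ≤ ∫⁻ x, min (G x) ((4 ^ n + 1 : ℕ) * T) := by
            apply lintegral_mono
            intro x
            refine le_min ?_ (hPW T x)
            refine ENNReal.tsum_le_tsum fun i => ?_
            by_cases hx : x ∈ Q i ∧ m i < T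
            · rw [if_pos hx, indicator_of_mem (hQsub i hx.1), mul_one]
            · rw [if_neg hx]
              exact zero_le
    have hKnat : ((4 ^ n + 1 : ℕ) : ℝ≥0∞) = ENNReal.ofReal Kr := by
      rw [hKrdef, show ((4:ℝ) ^ n + 1) = ((4 ^ n + 1 : ℕ) : ℝ) by push_cast; ring,
        ENNReal.ofReal_natCast]
    have hd : ∑' i, A i * m i ^ (p-1) ≤
        ∫⁻ t in Ioi (0:ℝ), ∫⁻ x,
          ENNReal.ofReal ((1-p) * t ^ (p-2)) * min (G x) (ENNReal.ofReal (Kr * t)) := by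
      refine le_trans hb ?_
      refine setLIntegral_mono ?_ ?_
      · exact hΨmeas.lintegral_prod_right'
      · intro t ht
        rw [lintegral_const_mul' _ _ ENNReal.ofReal_ne_top]
        refine mul_le_mul_right ?_ _
        refine le_trans (hc (ENNReal.ofReal t)) ?_
        apply lintegral_mono
        intro x
        refine min_le_min le_rfl ?_
        rw [hKnat, ← ENNReal.ofReal_mul hKr0.le]
    have hswap : ∫⁻ t in Ioi (0:ℝ), ∫⁻ x,
          ENNReal.ofReal ((1-p) * t ^ (p-2)) * min (G x) (ENNReal.ofReal (Kr * t))
        = ∫⁻ x, ∫⁻ t in Ioi (0:ℝ),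
          ENNReal.ofReal ((1-p) * t ^ (p-2)) * min (G x) (ENNReal.ofReal (Kr * t)) :=
      lintegral_lintegral_swap hΨmeas.aemeasurable
    have he : ∫⁻ x, ∫⁻ t in Ioi (0:ℝ),
          ENNReal.ofReal ((1-p) * t ^ (p-2)) * min (G x) (ENNReal.ofReal (Kr * t))
        ≤ ENNReal.ofReal (Kr ^ (1-p) / p) * ∫⁻ x, G x ^ p := by
      rw [← lintegral_const_mul' _ _ ENNReal.ofReal_ne_top]
      refine lintegral_mono_ae ?_
      filter_upwards [hGaelt] with x hx
      exact GK_t_calc hp0 hp1' hKr1 hx.ne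
    exact le_trans hd (le_trans (le_of_eq hswap) he)
  -- Key 2
  have hGp1meas : Measurable fun x => G x ^ (p-1) := hGmeas.pow_const _
  have hKey2 : ∫⁻ x, F x * G x ^ (p-1) ≤ ∑' i, A i * m i ^ (p-1) := by
    have h1 : ∫⁻ x, F x * G x ^ (p-1)
        = ∑' i, ∫⁻ x, ENNReal.ofReal (f i x) * G x ^ (p-1) := by
      rw [← lintegral_tsum]
      · apply lintegral_congr
        intro x
        rw [hFdef, ENNReal.tsum_mul_right]
      · intro i
        exact (ENNReal.measurable_ofReal.comp_aemeasurable (hint i).aemeasurable).mul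
          hGp1meas.aemeasurable
    rw [h1]
    refine ENNReal.tsum_le_tsum fun i => ?_
    rcases eq_or_ne (A i) 0 with hA0 | hA0
    · have hfae : (fun x => ENNReal.ofReal (f i x)) =ᵐ[volume] 0 :=
        (lintegral_eq_zero_iff' (ENNReal.measurable_ofReal.comp_aemeasurable
          (hint i).aemeasurable)).1 hA0
      have : ∫⁻ x, ENNReal.ofReal (f i x) * G x ^ (p-1) = 0 := by
        rw [← lintegral_zero]
        apply lintegral_congr_ae
        filter_upwards [hfae] with x hx
        rw [hx]
        exact zero_mul _
      rw [this]
      exact zero_le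
    · have hCc0 : Cc i ≠ 0 := by
        intro hcon
        rw [hA i, hcon, zero_mul] at hA0
        exact hA0 rfl
      have hm0 : m i ≠ 0 := by
        intro hcon
        exact hCc0 (le_antisymm (hcon ▸ hmCc i) (zero_le))
      have hmT : m i ^ (p-1) ≠ ⊤ := by
        intro hcon
        rcases ENNReal.rpow_eq_top_iff.1 hcon with ⟨hz, _⟩ | ⟨_, hpp⟩
        · exact hm0 hz
        · linarith
      have h2 : ∫⁻ x, ENNReal.ofReal (f i x) * G x ^ (p-1)
          = ∫⁻ x in Q i, ENNReal.ofReal (f i x) * G x ^ (p-1) := by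
        have h3 : (fun x => ENNReal.ofReal (f i x) * G x ^ (p-1))
            = (Q i).indicator (fun x => ENNReal.ofReal (f i x) * G x ^ (p-1)) := by
          funext x
          by_cases hx : x ∈ Q i
          · rw [indicator_of_mem hx]
          · rw [indicator_of_notMem hx]
            have hz : f i x = 0 := by
              by_contra hne
              exact hx (hsupp i hne)
            rw [hz, ENNReal.ofReal_zero, zero_mul]
        conv_lhs => rw [h3]
        exact lintegral_indicator (hQm i) _
      rw [h2]
      have h4 : ∫⁻ x in Q i, ENNReal.ofReal (f i x) * G x ^ (p-1)
          ≤ ∫⁻ x in Q i, ENNReal.ofReal (f i x) * m i ^ (p-1) := by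
        refine lintegral_mono_ae ?_
        have hae : ∀ᵐ x ∂(volume.restrict (Q i)), m i ≤ G x := ae_essInf_le
        filter_upwards [hae] with x hx
        exact mul_le_mul_right (GK_ennreal_rpow_antitone hx (by linarith)) _
      refine le_trans h4 ?_
      rw [lintegral_mul_const' _ _ hmT]
      refine mul_le_mul_left ?_ _
      have h5 : ∫⁻ x in Q i, ENNReal.ofReal (f i x) ≤ ∫⁻ x, ENNReal.ofReal (f i x) :=
        setLIntegral_le_lintegral _ _
      exact h5
  -- Hölder step
  have hae0 : ∀ᵐ x, ∀ i, Cc i = 0 → f i x = 0 := by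
    rw [ae_all_iff]
    intro i
    by_cases hCc0 : Cc i = 0
    · have hI0 : ∫ z, f i z ∂volume = 0 := by
        have hIQ : ∫ z in Q i, f i z = ∫ z, f i z := by
          refine setIntegral_eq_integral_of_forall_compl_eq_zero fun x hx => ?_
          by_contra hne
          exact hx (hsupp i hne)
        have hle := hCc0
        simp only [hCcdef, ENNReal.ofReal_eq_zero] at hle
        have hnum : ∫ z in Q i, f i z ≤ 0 := by
          by_contra hpos'
          push_neg at hpos'
          have hinv : (0:ℝ) < 1 / h i ^ n := by
            have hh : (0:ℝ) < h i ^ n := pow_pos (hpos i) n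
            positivity
          nlinarith [hle, hinv, hpos']
        rw [← hIQ]
        exact le_antisymm hnum (hInn i)
      have hfae := (integral_eq_zero_iff_of_nonneg (fun x => hnn i x) (hint i)).1 hI0
      filter_upwards [hfae] with x hx
      intro _
      exact hx
    · filter_upwards with x hx
      exact absurd hx hCc0
  have hHolder : ∫⁻ x, F x ^ p
      ≤ (∫⁻ x, F x * G x ^ (p-1)) ^ p * (∫⁻ x, G x ^ p) ^ (1-p) := by
    have hq : (1/p : ℝ).HolderConjugate (1/(1-p)) := by
      rw [Real.holderConjugate_iff]
      constructor
      · exact one_lt_one_div hp0 hp1'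
      · simp only [one_div, inv_inv]
        ring
    have hu : AEMeasurable (fun x => (F x * G x ^ (p-1)) ^ p) volume :=
      ((hFmeas.mul hGp1meas.aemeasurable).pow_const _)
    have hv : AEMeasurable (fun x => G x ^ (p * (1-p))) volume :=
      (hGmeas.pow_const _).aemeasurable
    have key := ENNReal.lintegral_mul_le_Lp_mul_Lq volume hq hu hv
    have hptwise : ∀ᵐ x, F x ^ p ≤ (F x * G x ^ (p-1)) ^ p * G x ^ (p * (1-p)) := by
      filter_upwards [hae0, hGaelt] with x hx0 hxT
      rcases eq_or_ne (F x) 0 with hF0 | hF0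
      · rw [hF0, ENNReal.zero_rpow_of_pos hp0]
        exact zero_le
      · have hGx0 : G x ≠ 0 := by
          have h1 : ∃ i, ENNReal.ofReal (f i x) ≠ 0 := by
            by_contra hcon
            push_neg at hcon
            exact hF0 (ENNReal.tsum_eq_zero.2 hcon)
          obtain ⟨i, hi⟩ := h1
          have hfi : f i x ≠ 0 := by
            intro hz
            rw [hz, ENNReal.ofReal_zero] at hi
            exact hi rfl
          have hxQ : x ∈ Q i := hsupp i hfi
          have hCc0 : Cc i ≠ 0 := by
            intro hz
            exact hfi (hx0 i hz)
          intro hz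
          exact hCc0 (le_antisymm (hz ▸ hGge i x hxQ) (zero_le))
        refine le_of_eq ?_
        rw [ENNReal.mul_rpow_of_nonneg _ _ hp0.le, mul_assoc]
        rw [← ENNReal.rpow_mul (G x) (p-1) p, ← ENNReal.rpow_add _ _ hGx0 hxT.ne]
        rw [show (p-1) * p + p * (1-p) = 0 by ring, ENNReal.rpow_zero, mul_one]
    calc ∫⁻ x, F x ^ p
        ≤ ∫⁻ x, (F x * G x ^ (p-1)) ^ p * G x ^ (p * (1-p)) := lintegral_mono_ae hptwise
      _ = ∫⁻ x, ((fun x => (F x * G x ^ (p-1)) ^ p) * fun x => G x ^ (p * (1-p))) x := rfl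
      _ ≤ (∫⁻ x, ((F x * G x ^ (p-1)) ^ p) ^ (1/p : ℝ)) ^ (1/(1/p) : ℝ)
          * (∫⁻ x, (G x ^ (p * (1-p))) ^ (1/(1-p) : ℝ)) ^ (1/(1/(1-p)) : ℝ) := key
      _ = (∫⁻ x, F x * G x ^ (p-1)) ^ p * (∫⁻ x, G x ^ p) ^ (1-p) := by
          rw [one_div_one_div, one_div_one_div]
          congr 1
          · congr 1
            apply lintegral_congr
            intro x
            rw [← ENNReal.rpow_mul, mul_one_div, div_self hp0.ne', ENNReal.rpow_one]
          · congr 1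
            apply lintegral_congr
            intro x
            rw [← ENNReal.rpow_mul, mul_one_div, mul_div_assoc,
              div_self ((by linarith : (0:ℝ) < 1-p)).ne', mul_one]
  -- final assembly
  set X : ℝ≥0∞ := ∫⁻ x, G x ^ p with hXdef
  set B : ℝ≥0∞ := ENNReal.ofReal (Kr ^ (1-p) / p) with hBdef
  have hchain : ∫⁻ x, F x ^ p ≤ B ^ p * X := by
    have h1 : ∫⁻ x, F x * G x ^ (p-1) ≤ B * X := le_trans hKey2 hKey3
    calc ∫⁻ x, F x ^ p ≤ (∫⁻ x, F x * G x ^ (p-1)) ^ p * X ^ (1-p) := hHolder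
      _ ≤ (B * X) ^ p * X ^ (1-p) := by
          exact mul_le_mul_left (ENNReal.rpow_le_rpow h1 hp0.le) _
      _ = B ^ p * (X ^ p * X ^ (1-p)) := by
          rw [ENNReal.mul_rpow_of_nonneg _ _ hp0.le, mul_assoc]
      _ = B ^ p * X := by
          rw [← ENNReal.rpow_add_of_nonneg p (1-p) hp0.le (by linarith),
            show p + (1-p) = 1 by ring, ENNReal.rpow_one]
  have hfinal : (∫⁻ x, F x ^ p) ^ (1/p) ≤ B * X ^ (1/p) := by
    calc (∫⁻ x, F x ^ p) ^ (1/p) ≤ (B ^ p * X) ^ (1/p) :=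
        ENNReal.rpow_le_rpow hchain (by positivity)
      _ = B * X ^ (1/p) := by
        rw [ENNReal.mul_rpow_of_nonneg _ _ (by positivity : (0:ℝ) ≤ 1/p),
          ← ENNReal.rpow_mul, mul_one_div, div_self hp0.ne', ENNReal.rpow_one]
  refine le_trans hfinal ?_
  refine mul_le_mul_left ?_ _
  rw [hBdef]
  refine ENNReal.ofReal_le_ofReal ?_
  have hKle : Kr ^ (1-p) ≤ Kr := by
    calc Kr ^ (1-p) ≤ Kr ^ (1:ℝ) := Real.rpow_le_rpow_of_exponent_le hKr1 (by linarith)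
      _ = Kr := Real.rpow_one Kr
  exact (div_le_div_iff_of_pos_right hp0).2 hKle



/-- Grafakos–Kalton lemma: the `L^p` quasinorm (`0 < p ≤ 1`) of a sum
of nonnegative functions supported in cubes is controlled by that of the sum of their
averages spread over the dilated cubes `Q* = 2√n Q`. -/
theorem lp_sum_le_lp_averages
    (n : ℕ) (hn : 0 < n) (p : ℝ) (hp0 : 0 < p) (hp1 : p ≤ 1) :
    ∃ C : ℝ, 0 < C ∧
      ∀ (ι : Type) (_ : Countable ι) (c : ι → En n) (h : ι → ℝ)
        (f : ι → En n → ℝ),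
        (∀ i, 0 < h i) →
        (∀ i, Integrable (f i) volume) →
        (∀ i x, 0 ≤ f i x) →
        (∀ i, Function.support (f i) ⊆ cube (c i) (h i)) →
        (∫⁻ x : En n, (∑' i : ι, ENNReal.ofReal (f i x)) ^ p ∂volume) ^ (1 / p) ≤
          ENNReal.ofReal C *
            (∫⁻ x : En n,
                (∑' i : ι,
                  ENNReal.ofReal ((1 / h i ^ n) * ∫ z in cube (c i) (h i), f i z) *
                    (cube (c i) (2 * Real.sqrt n * h i)).indicator
                      (fun _ => (1 : ℝ≥0∞)) x) ^ p ∂volume) ^ (1 / p) := by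
  refine ⟨((4:ℝ) ^ n + 1) / p, by positivity, ?_⟩
  intro ι hcnt c h f hpos hint hnn hsupp
  exact GK_core hn hp0 hp1 ι hcnt c h f hpos hint hnn hsupp

end
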